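/- (Von Szily identity) For all nonnegative integers m and n, S(m,n) = \sum_{k \in \mathbb{Z}} (-1)^k \binom{2n}{n-k} \binom{2m}{m+k}, where S(m,n) = (2m)!(2n)!/(m! n! (m+n)!). -/

import Mathlib

/-- Binomial coefficient with an integer lower argument: `0` when the lower
argument is negative (and, via `Nat.choose`, `0` when it exceeds the top). -/
def ichoose (a : ℕ) (b : ℤ) : ℤ := if 0 ≤ b then (a.choose b.toNat : ℤ) else 0

/-- Super Catalan number `S(m,n) = (2m)!(2n)!/(m! n! (m+n)!)`. -/
def superCatalan (m n : ℕ) : ℕ :=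
  (Nat.factorial (2 * m) * Nat.factorial (2 * n)) /
    (Nat.factorial m * Nat.factorial n * Nat.factorial (m + n))

lemma ichoose_neg (a : ℕ) (b : ℤ) (h : b < 0) : ichoose a b = 0 := by
  simp [ichoose, not_le.2 h]

lemma ichoose_big (a : ℕ) (b : ℤ) (h : (a : ℤ) < b) : ichoose a b = 0 := by
  have hb : 0 ≤ b := le_trans (by positivity) h.le
  have : a < b.toNat := by omega
  simp [ichoose, hb, Nat.choose_eq_zero_of_lt this]

lemma ichoose_succ (a : ℕ) (b : ℤ) : ichoose (a + 1) b = ichoose a b + ichoose a (b - 1) := by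
  rcases lt_trichotomy b 0 with h | h | h
  · rw [ichoose_neg _ _ h, ichoose_neg _ _ h, ichoose_neg _ _ (by omega)]; ring
  · subst h; simp [ichoose]
  · obtain ⟨t, ht⟩ : ∃ t : ℕ, b = (t : ℤ) + 1 := ⟨(b - 1).toNat, by omega⟩
    subst ht
    have h1 : ((t : ℤ) + 1).toNat = t + 1 := by omega
    have h2 : ((t : ℤ) + 1 - 1).toNat = t := by omega
    simp only [ichoose, h1, if_pos (by omega : (0:ℤ) ≤ (t:ℤ)+1),
      if_pos (by omega : (0:ℤ) ≤ (t:ℤ)+1-1), h2]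
    rw [Nat.choose_succ_succ]
    push_cast; ring

lemma sign_shift (k : ℤ) : ((-1 : ℤ)) ^ (k - 1).natAbs = -((-1 : ℤ)) ^ k.natAbs := by
  rcases Int.even_or_odd k with h | h
  · have h1 : ¬ Even (k - 1) := by simp [Int.even_sub, h]
    have h2 : Odd (k - 1).natAbs := by
      rw [Int.natAbs_odd, Int.not_even_iff_odd.symm]; exact h1
    have h3 : Even k.natAbs := Int.natAbs_even.2 h
    rw [Odd.neg_one_pow h2, Even.neg_one_pow h3]
  · have h1 : Even (k - 1) := by
      rw [Int.even_sub]; simp [(Int.not_even_iff_odd.2 h : ¬Even k)]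
    have h2 : Even (k - 1).natAbs := Int.natAbs_even.2 h1
    have h3 : Odd k.natAbs := Int.natAbs_odd.2 h
    rw [Even.neg_one_pow h2, Odd.neg_one_pow h3]; ring

def F (m n : ℕ) (k : ℤ) : ℤ :=
  (-1) ^ k.natAbs * ichoose (2 * n) ((n : ℤ) - k) * ichoose (2 * m) ((m : ℤ) + k)

noncomputable def T (m n : ℕ) : ℤ := ∑ k ∈ Finset.Icc (-(m : ℤ) - n) ((m : ℤ) + n), F m n k

/-- sums of a function vanishing outside `[lo,hi]` agree on any intervals containing `[lo,hi]`. -/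
lemma sum_Icc_ext (f : ℤ → ℤ) (lo hi : ℤ)
    (hf : ∀ k, k < lo ∨ hi < k → f k = 0)
    {a b a' b' : ℤ} (h1 : a ≤ lo) (h2 : hi ≤ b) (h3 : a' ≤ lo) (h4 : hi ≤ b') :
    ∑ k ∈ Finset.Icc a b, f k = ∑ k ∈ Finset.Icc a' b', f k := by
  have key : ∀ c d : ℤ, c ≤ lo → hi ≤ d →
      ∑ k ∈ Finset.Icc c d, f k = ∑ k ∈ Finset.Icc lo hi, f k := by
    intro c d hc hd
    refine (Finset.sum_subset (Finset.Icc_subset_Icc hc hd) ?_).symm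
    intro x hx hx'
    simp only [Finset.mem_Icc] at hx hx'
    exact hf x (by omega)
  rw [key a b h1 h2, key a' b' h3 h4]

lemma F_support (m n : ℕ) (k : ℤ) (h : k < -(m : ℤ) - n ∨ (m : ℤ) + n < k) :
    F m n k = 0 := by
  rcases h with h | h
  · have : (m : ℤ) + k < 0 := by omega
    simp [F, ichoose_neg _ _ this]
  · have : (2 * n : ℕ) < (n : ℤ) - k → True := fun _ => trivial
    have h2 : ((n : ℤ)) - k < 0 := by omega
    simp [F, ichoose_neg _ _ h2]

/-- reindexing: `∑_{[a,b]} f (k-1) = ∑_{[a-1,b-1]} f k`. -/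
lemma sum_shift (f : ℤ → ℤ) (a b : ℤ) :
    ∑ k ∈ Finset.Icc a b, f (k - 1) = ∑ k ∈ Finset.Icc (a - 1) (b - 1), f k := by
  have h : Finset.Icc a b = (Finset.Icc (a - 1) (b - 1)).map (addRightEmbedding 1) := by
    rw [Finset.map_add_right_Icc]; congr 1 <;> ring
  rw [h, Finset.sum_map]
  apply Finset.sum_congr rfl
  intro x _
  simp [addRightEmbedding]

lemma T_base (m : ℕ) : T m 0 = ((2 * m).choose m : ℤ) := by
  unfold T
  rw [Finset.sum_eq_single 0]
  · simp [F, ichoose]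
  · intro k hk hk0
    have hz : ichoose 0 (-k) = 0 := by
      rcases lt_or_gt_of_ne hk0 with h | h
      · exact ichoose_big 0 (-k) (by push_cast; omega)
      · exact ichoose_neg 0 (-k) (by omega)
    simp [F, hz]
  · intro h
    exfalso
    apply h
    simp only [Finset.mem_Icc]
    push_cast
    omega

lemma ichoose_two_step (a : ℕ) (b : ℤ) :
    ichoose (a + 2) b = ichoose a b + 2 * ichoose a (b - 1) + ichoose a (b - 2) := by
  have h1 : ichoose (a + 2) b = ichoose (a + 1) b + ichoose (a + 1) (b - 1) := ichoose_succ (a+1) b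
  rw [h1, ichoose_succ, ichoose_succ]
  have : b - 1 - 1 = b - 2 := by ring
  rw [this]; ring

lemma T_rec (m n : ℕ) : T m (n + 1) = 4 * T m n - T (m + 1) n := by
  set a : ℤ := -(m : ℤ) - n - 2 with ha
  set b : ℤ := (m : ℤ) + n + 2 with hb
  have e1 : T m (n + 1) = ∑ k ∈ Finset.Icc a b, F m (n + 1) k := by
    unfold T
    apply sum_Icc_ext _ (-(m : ℤ) - (n+1)) ((m : ℤ) + (n+1))
      (fun k hk => F_support m (n+1) k (by push_cast at hk ⊢; omega)) <;> push_cast <;> omega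
  have e2 : T (m + 1) n = ∑ k ∈ Finset.Icc a b, F (m + 1) n k := by
    unfold T
    apply sum_Icc_ext _ (-((m:ℕ)+1 : ℤ) - n) (((m:ℕ)+1 : ℤ) + n)
      (fun k hk => F_support (m+1) n k (by push_cast at hk ⊢; omega)) <;> push_cast <;> omega
  have e3 : T m n = ∑ k ∈ Finset.Icc a b, F m n k := by
    unfold T
    apply sum_Icc_ext _ (-(m : ℤ) - n) ((m : ℤ) + n)
      (fun k hk => F_support m n k (by omega)) <;> omega
  -- telescoping pieces
  set H1 : ℤ → ℤ := fun k => (-1) ^ k.natAbs * ichoose (2 * n) ((n : ℤ) - k) *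
    ichoose (2 * m) ((m : ℤ) + 1 + k) with hH1
  set H2 : ℤ → ℤ := fun k => (-1) ^ k.natAbs * ichoose (2 * n) ((n : ℤ) - 1 - k) *
    ichoose (2 * m) ((m : ℤ) + k) with hH2
  have H1supp : ∀ k, k < -(m : ℤ) - n - 1 ∨ (m : ℤ) + n < k → H1 k = 0 := by
    intro k hk
    rcases hk with h | h
    · have : (m : ℤ) + 1 + k < 0 := by omega
      simp [hH1, ichoose_neg _ _ this]
    · have : (n : ℤ) - k < 0 := by omega
      simp [hH1, ichoose_neg _ _ this]
  have H2supp : ∀ k, k < -(m : ℤ) - n ∨ (m : ℤ) + n < k → H2 k = 0 := by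
    intro k hk
    rcases hk with h | h
    · have : (m : ℤ) + k < 0 := by omega
      simp [hH2, ichoose_neg _ _ this]
    · have : (n : ℤ) - 1 - k < 0 := by omega
      simp [hH2, ichoose_neg _ _ this]
  have pointwise : ∀ k, F m (n + 1) k + F (m + 1) n k - 4 * F m n k
      = (H1 k - H1 (k - 1)) + (H2 k - H2 (k - 1)) := by
    intro k
    have c1 : (2 * (n + 1) : ℕ) = 2 * n + 2 := by ring
    have c2 : (2 * (m + 1) : ℕ) = 2 * m + 2 := by ring
    unfold F
    rw [c1, c2, ichoose_two_step, ichoose_two_step]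
    rw [hH1, hH2]
    simp only []
    rw [sign_shift k]
    have r1 : ((n : ℕ) + 1 : ℤ) - k - 1 = (n : ℤ) - k := by push_cast; ring
    have r2 : ((n : ℕ) + 1 : ℤ) - k - 2 = (n : ℤ) - 1 - k := by push_cast; ring
    have r3 : ((m : ℕ) + 1 : ℤ) + k - 1 = (m : ℤ) + k := by push_cast; ring
    have r4 : ((m : ℕ) + 1 : ℤ) + k - 2 = (m : ℤ) + k - 1 := by push_cast; ring
    have r5 : (n : ℤ) - (k - 1) = ((n : ℕ) + 1 : ℤ) - k := by push_cast; ring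
    have r6 : (m : ℤ) + 1 + (k - 1) = (m : ℤ) + k := by ring
    have r7 : (n : ℤ) - 1 - (k - 1) = (n : ℤ) - k := by ring
    have r8 : (m : ℤ) + (k - 1) = (m : ℤ) + k - 1 := by ring
    push_cast [r5, r6, r7, r8]
    ring_nf
  have shift1 : ∑ k ∈ Finset.Icc a b, H1 (k - 1) = ∑ k ∈ Finset.Icc a b, H1 k := by
    rw [sum_shift]
    exact sum_Icc_ext _ (-(m : ℤ) - n - 1) ((m : ℤ) + n) H1supp (by omega) (by omega) (by omega) (by omega)
  have shift2 : ∑ k ∈ Finset.Icc a b, H2 (k - 1) = ∑ k ∈ Finset.Icc a b, H2 k := by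
    rw [sum_shift]
    exact sum_Icc_ext _ (-(m : ℤ) - n) ((m : ℤ) + n) H2supp (by omega) (by omega) (by omega) (by omega)
  have A : ∑ k ∈ Finset.Icc a b, (F m (n + 1) k + F (m + 1) n k - 4 * F m n k) = 0 := by
    rw [Finset.sum_congr rfl (fun k _ => pointwise k)]
    rw [Finset.sum_add_distrib, Finset.sum_sub_distrib, Finset.sum_sub_distrib, shift1, shift2]
    ring
  rw [Finset.sum_sub_distrib, Finset.sum_add_distrib, ← Finset.mul_sum] at A
  rw [e1, e2, e3]
  have main : (0:ℤ) = 0 := rfl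
  linarith [A]

def Q (m n : ℕ) : ℚ :=
  ((2 * m).factorial * (2 * n).factorial : ℚ) /
    (m.factorial * n.factorial * (m + n).factorial)

lemma Q_base (m : ℕ) : Q m 0 = ((2 * m).choose m : ℚ) := by
  have h := Nat.choose_mul_factorial_mul_factorial (Nat.le_mul_of_pos_left m (by norm_num) : m ≤ 2 * m)
  have h2 : 2 * m - m = m := by omega
  rw [h2] at h
  unfold Q
  rw [div_eq_iff (by positivity)]
  push_cast [← h]
  simp [Nat.factorial]
  ring

lemma Q_rec (m n : ℕ) : Q m (n + 1) = 4 * Q m n - Q (m + 1) n := by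
  unfold Q
  have c1 : 2 * (n + 1) = 2 * n + 1 + 1 := by ring
  have c2 : 2 * (m + 1) = 2 * m + 1 + 1 := by ring
  have c3 : m + (n + 1) = m + n + 1 := by ring
  have c4 : m + 1 + n = m + n + 1 := by ring
  rw [c1, c2, c3, c4]
  simp only [Nat.factorial_succ]
  have hm : (m.factorial : ℚ) ≠ 0 := by positivity
  have hn : (n.factorial : ℚ) ≠ 0 := by positivity
  have hmn : ((m + n).factorial : ℚ) ≠ 0 := by positivity
  have h1 : ((m : ℚ) + n + 1) ≠ 0 := by positivity
  have h2 : ((n : ℚ) + 1) ≠ 0 := by positivity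
  have h3 : ((m : ℚ) + 1) ≠ 0 := by positivity
  push_cast
  field_simp
  ring

lemma T_eq_Q : ∀ n m : ℕ, ((T m n : ℤ) : ℚ) = Q m n := by
  intro n
  induction n with
  | zero =>
    intro m
    rw [T_base, Q_base]
    push_cast
    rfl
  | succ n ih =>
    intro m
    rw [T_rec]
    push_cast
    rw [ih m, ih (m + 1), Q_rec]

/-- Von Szily's identity:
`S(m,n) = ∑_k (-1)^k C(2n, n-k) C(2m, m+k)`, the sum over all integers `k`
(all nonzero terms lie in `-m-n ≤ k ≤ m+n`). -/
theorem von_szily (m n : ℕ) :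
    (superCatalan m n : ℤ) =
      ∑ k ∈ Finset.Icc (-(m : ℤ) - n) ((m : ℤ) + n),
        (-1) ^ k.natAbs * ichoose (2 * n) ((n : ℤ) - k) * ichoose (2 * m) ((m : ℤ) + k) := by
  have hTQ := T_eq_Q n m
  set N : ℕ := (2 * m).factorial * (2 * n).factorial with hN
  set D : ℕ := m.factorial * n.factorial * (m + n).factorial with hD
  have hDpos : 0 < D := by positivity
  have hNpos : 0 < N := by positivity
  have hQ : Q m n = (N : ℚ) / D := by rw [Q, hN, hD]; congr 1 <;> push_cast <;> ring
  have hTD : (T m n : ℚ) * D = N := by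
    rw [hTQ, hQ, div_mul_cancel₀]
    exact_mod_cast hDpos.ne'
  have hTDZ : T m n * (D : ℤ) = (N : ℤ) := by exact_mod_cast hTD
  have hT0 : 0 ≤ T m n := by nlinarith [hTDZ, Int.natCast_pos.2 hDpos, Int.natCast_pos.2 hNpos]
  have hNat : N = (T m n).toNat * D := by
    have : ((T m n).toNat * D : ℤ) = (N : ℤ) := by
      rw [Int.toNat_of_nonneg hT0] at *
      push_cast
      linarith [hTDZ]
    exact_mod_cast this.symm
  have hdiv : N / D = (T m n).toNat := Nat.div_eq_of_eq_mul_left hDpos hNat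
  have hsc : superCatalan m n = (T m n).toNat := by
    rw [superCatalan, ← hN, ← hD, hdiv]
  rw [hsc]
  rw [Int.toNat_of_nonneg hT0]
  rfl
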